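/- For all ũ ∈ ℝ^M and v ∈ ℝ^N one has |ũᵀ M̃_W H̃ v − ε · ũᵀ M̃_P v| ≤ ‖id_W − Ĩ∘σ̃‖ · ‖Ĩ‖ · ‖⋆‖ · ‖I‖ · ‖ũ‖ · ‖v‖, where the first four factors are operator norms. Hence the natural discrete Hodge matrix H̃ and the Galerkin projection discrete Hodge data (M̃_W)⁻¹ ε M̃_P agree, in the sense ũᵀ M̃_W H̃ v = ε ũᵀ M̃_P v up to an error controlled by the projection error ‖id_W − Ĩ∘σ̃‖ (the paper's Proposition relating the Galerkin projection and natural Hodge star operators). -/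

import Mathlib

lemma apply_eq_sum_single {E : Type*} [NormedAddCommGroup E] [NormedSpace ℝ E] {n : ℕ}
    (T : EuclideanSpace ℝ (Fin n) →L[ℝ] E) (x : EuclideanSpace ℝ (Fin n)) :
    T x = ∑ i, x i • T (EuclideanSpace.single i 1) := by
  have hx : x = ∑ i, x i • (EuclideanSpace.single i 1 : EuclideanSpace ℝ (Fin n)) := by
    have := (EuclideanSpace.basisFun (Fin n) ℝ).sum_repr x
    simpa [EuclideanSpace.basisFun_apply, EuclideanSpace.basisFun_repr] using this.symm
  conv_lhs => rw [hx]
  simp [map_sum]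

/-- The natural discrete Hodge matrix `H̃` and the Galerkin projection
discrete Hodge data `(M̃_W)⁻¹ ε M̃_P` agree up to the projection error:
`|ũᵀ M̃_W H̃ v − ε ũᵀ M̃_P v| ≤ ‖id_W − Ĩ∘σ̃‖ ‖Ĩ‖ ‖⋆‖ ‖I‖ ‖ũ‖ ‖v‖`. -/
theorem natural_vs_galerkin_hodge
    {V W : Type*} [NormedAddCommGroup V] [InnerProductSpace ℝ V]
    [NormedAddCommGroup W] [InnerProductSpace ℝ W]
    (B : W →ₗ[ℝ] V →ₗ[ℝ] ℝ)
    (hodge : V →L[ℝ] W) (ε : ℝ) (hε : ε = 1 ∨ ε = -1)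
    (hhodge : ∀ (w : W) (v : V), (inner ℝ w (hodge v) : ℝ) = ε * B w v)
    {N M : ℕ}
    (I : EuclideanSpace ℝ (Fin N) →L[ℝ] V)
    (σt : W →L[ℝ] EuclideanSpace ℝ (Fin M))
    (It : EuclideanSpace ℝ (Fin M) →L[ℝ] W)
    (hσIt : ∀ c, σt (It c) = c)
    (MW : Matrix (Fin M) (Fin M) ℝ)
    (hMW : ∀ i j, MW i j =
      (inner ℝ (It (EuclideanSpace.single i 1)) (It (EuclideanSpace.single j 1)) : ℝ))
    (MP : Matrix (Fin M) (Fin N) ℝ)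
    (hMP : ∀ i j, MP i j =
      B (It (EuclideanSpace.single i 1)) (I (EuclideanSpace.single j 1)))
    (Ht : Matrix (Fin M) (Fin N) ℝ)
    (hHt : ∀ i j, Ht i j = σt (hodge (I (EuclideanSpace.single j 1))) i)
    (u : EuclideanSpace ℝ (Fin M)) (v : EuclideanSpace ℝ (Fin N)) :
    |(∑ i, u i * ∑ j, (MW * Ht) i j * v j) - ε * ∑ i, u i * ∑ j, MP i j * v j| ≤
      ‖ContinuousLinearMap.id ℝ W - It.comp σt‖ * ‖It‖ * ‖hodge‖ * ‖I‖ * ‖u‖ * ‖v‖ := by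
  -- inner product of It images via MW
  have innerItIt : ∀ a b : EuclideanSpace ℝ (Fin M),
      (inner ℝ (It a) (It b) : ℝ) = ∑ i, ∑ k, a i * (b k * MW i k) := by
    intro a b
    rw [apply_eq_sum_single It a, apply_eq_sum_single It b]
    simp only [sum_inner, inner_sum, real_inner_smul_left, real_inner_smul_right]
    simp only [hMW]
    rw [Finset.sum_comm]
    exact Finset.sum_congr rfl fun i _ => Finset.sum_congr rfl fun k _ => by ring
  -- coordinates of σt (hodge (I v))
  have coord : ∀ (x : EuclideanSpace ℝ (Fin M)) (k : Fin M),
      x k = (inner ℝ (EuclideanSpace.single k (1:ℝ)) x : ℝ) := by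
    intro x k
    simp [EuclideanSpace.inner_single_left]
  have hc : ∀ k, σt (hodge (I v)) k = ∑ j, Ht k j * v j := by
    intro k
    rw [coord (σt (hodge (I v))) k, apply_eq_sum_single I v]
    simp only [map_sum, map_smul, inner_sum, real_inner_smul_right]
    refine Finset.sum_congr rfl fun j _ => ?_
    rw [← coord, hHt]
    ring
  -- Step A
  have hA : (∑ i, u i * ∑ j, (MW * Ht) i j * v j) =
      (inner ℝ (It u) (It (σt (hodge (I v)))) : ℝ) := by
    rw [innerItIt]
    refine Finset.sum_congr rfl fun i _ => ?_
    rw [Finset.mul_sum]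
    simp only [Matrix.mul_apply, hc, Finset.sum_mul, Finset.mul_sum]
    rw [Finset.sum_comm]
    exact Finset.sum_congr rfl fun j _ => Finset.sum_congr rfl fun k _ => by ring
  -- Step B
  have hB : ε * ∑ i, u i * ∑ j, MP i j * v j =
      (inner ℝ (It u) (hodge (I v)) : ℝ) := by
    rw [apply_eq_sum_single It u, apply_eq_sum_single I v]
    simp only [map_sum, map_smul, sum_inner, inner_sum, real_inner_smul_left,
      real_inner_smul_right, hhodge, LinearMap.smul_apply, smul_eq_mul]
    simp only [hMP, Finset.mul_sum]
    rw [Finset.sum_comm]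
    refine Finset.sum_congr rfl fun i _ => Finset.sum_congr rfl fun j _ => ?_
    ring
  rw [hA, hB]
  have hdiff : (inner ℝ (It u) (It (σt (hodge (I v)))) : ℝ) - inner ℝ (It u) (hodge (I v)) =
      - inner ℝ (It u) ((ContinuousLinearMap.id ℝ W - It.comp σt) (hodge (I v))) := by
    simp only [ContinuousLinearMap.sub_apply, ContinuousLinearMap.coe_id', id_eq,
      ContinuousLinearMap.comp_apply, inner_sub_right]
    ring
  rw [hdiff, abs_neg]
  calc |(inner ℝ (It u) ((ContinuousLinearMap.id ℝ W - It.comp σt) (hodge (I v))) : ℝ)|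
      ≤ ‖It u‖ * ‖(ContinuousLinearMap.id ℝ W - It.comp σt) (hodge (I v))‖ :=
        abs_real_inner_le_norm _ _
    _ ≤ (‖It‖ * ‖u‖) * (‖ContinuousLinearMap.id ℝ W - It.comp σt‖ * (‖hodge‖ * (‖I‖ * ‖v‖))) := by
        gcongr
        · exact It.le_opNorm u
        · calc ‖(ContinuousLinearMap.id ℝ W - It.comp σt) (hodge (I v))‖
              ≤ ‖ContinuousLinearMap.id ℝ W - It.comp σt‖ * ‖hodge (I v)‖ :=
                ContinuousLinearMap.le_opNorm _ _
            _ ≤ ‖ContinuousLinearMap.id ℝ W - It.comp σt‖ * (‖hodge‖ * (‖I‖ * ‖v‖)) := by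
                gcongr
                calc ‖hodge (I v)‖ ≤ ‖hodge‖ * ‖I v‖ := hodge.le_opNorm _
                  _ ≤ ‖hodge‖ * (‖I‖ * ‖v‖) := by gcongr; exact I.le_opNorm v
    _ = ‖ContinuousLinearMap.id ℝ W - It.comp σt‖ * ‖It‖ * ‖hodge‖ * ‖I‖ * ‖u‖ * ‖v‖ := by ring
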